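/- arXiv:1711.06927 — 2 statements merged into one kernel-verified Lean document; each statement's English description precedes it below -/
import Mathlib

section
/- Fix an integer k with 7 ≤ k ≤ 11 and set h = 2. For z = (x,y) ∈ ℝ^k × ℝ^2 write u = |x|^2, v = (k−1)|y|^2, and let f(x,y) = (u − v)u^{3/2}/4 and g = ∇f/|∇f|. Then at every point with u > v, div g = [ (1/64)(k−1) u^{5/2} (u − v) ( 25u^2 + 12(k−11)uv + 27v^2 ) ] / [ (1/16) u^2 ( 25u^2 + 2(2k−17)uv + 9v^2 ) ]^{3/2}; in particular |∇f|^2 = (1/16) u^2 ( 25u^2 + 2(2k−17)uv + 9v^2 ) there. -/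
open MeasureTheory
open scoped RealInnerProductSpace ENNReal

noncomputable section

/-- Euclidean norm of the first (`ℝ^k`) component of `z = (x, y)`. -/
def nX (k h : ℕ) (z : EuclideanSpace ℝ (Fin (k + h))) : ℝ :=
  Real.sqrt (∑ i : Fin k, (z (Fin.castAdd h i)) ^ 2)

/-- Euclidean norm of the second (`ℝ^h`) component of `z = (x, y)`. -/
def nY (k h : ℕ) (z : EuclideanSpace ℝ (Fin (k + h))) : ℝ :=
  Real.sqrt (∑ j : Fin h, (z (Fin.natAdd k j)) ^ 2)

/-- The Lawson cone `M_{kh}`. -/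
def Mset (k h : ℕ) : Set (EuclideanSpace ℝ (Fin (k + h))) :=
  {z | nX k h z / Real.sqrt ((k : ℝ) - 1) = nY k h z / Real.sqrt ((h : ℝ) - 1)}

/-- The open region `K_{kh}` bounded by the Lawson cone. -/
def Kset (k h : ℕ) : Set (EuclideanSpace ℝ (Fin (k + h))) :=
  {z | nX k h z / Real.sqrt ((k : ℝ) - 1) < nY k h z / Real.sqrt ((h : ℝ) - 1)}

/-- The cylinder `H_R = B_R^k × B_R^h`. -/
def Hset (k h : ℕ) (R : ℝ) : Set (EuclideanSpace ℝ (Fin (k + h))) :=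
  {z | nX k h z < R ∧ nY k h z < R}

/-- The exceptional set `S` of pairs. -/
def S : Set (ℕ × ℕ) := {(3, 5), (2, 7), (2, 8), (2, 9), (2, 10), (2, 11)}

/-- Divergence of a vector field, as the trace of its derivative
(equivalently `∑ i, ∂ᵢ gᵢ`). -/
def divg {n : ℕ} (g : EuclideanSpace ℝ (Fin n) → EuclideanSpace ℝ (Fin n))
    (z : EuclideanSpace ℝ (Fin n)) : ℝ :=
  LinearMap.trace ℝ _ (fderiv ℝ g z).toLinearMap

/-- `u = (h-1)|x|^2 = |x|^2` (here `h = 2`). -/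
def uu (k : ℕ) (z : EuclideanSpace ℝ (Fin (k + 2))) : ℝ := nX k 2 z ^ 2

/-- `v = (k-1)|y|^2`. -/
def vv (k : ℕ) (z : EuclideanSpace ℝ (Fin (k + 2))) : ℝ := ((k : ℝ) - 1) * nY k 2 z ^ 2

/-- `f₊(x,y) = (u - v)·u^{3/2}/4`. -/
def fp (k : ℕ) (z : EuclideanSpace ℝ (Fin (k + 2))) : ℝ :=
  (uu k z - vv k z) * uu k z ^ ((3 : ℝ) / 2) / 4

/-- `f₋(x,y) = (u - v)·v/4`. -/
def fm (k : ℕ) (z : EuclideanSpace ℝ (Fin (k + 2))) : ℝ := (uu k z - vv k z) * vv k z / 4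

namespace Aux14

variable {k : ℕ}

abbrev E (k : ℕ) := EuclideanSpace ℝ (Fin (k + 2))

def Uf (k : ℕ) (w : E k) : ℝ := ∑ i : Fin k, w (Fin.castAdd 2 i) ^ 2
def Qf (k : ℕ) (w : E k) : ℝ := ∑ j : Fin 2, w (Fin.natAdd k j) ^ 2

lemma Uf_nonneg (w : E k) : 0 ≤ Uf k w := Finset.sum_nonneg fun _ _ => sq_nonneg _
lemma Qf_nonneg (w : E k) : 0 ≤ Qf k w := Finset.sum_nonneg fun _ _ => sq_nonneg _

def LU (k : ℕ) (z : E k) : E k →L[ℝ] ℝ :=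
  ∑ i : Fin k, (2 * z (Fin.castAdd 2 i)) • (EuclideanSpace.proj (Fin.castAdd 2 i) : E k →L[ℝ] ℝ)
def LQ (k : ℕ) (z : E k) : E k →L[ℝ] ℝ :=
  ∑ j : Fin 2, (2 * z (Fin.natAdd k j)) • (EuclideanSpace.proj (Fin.natAdd k j) : E k →L[ℝ] ℝ)

lemma LU_apply (z h : E k) :
    LU k z h = ∑ i : Fin k, 2 * z (Fin.castAdd 2 i) * h (Fin.castAdd 2 i) := by
  simp [LU, mul_assoc]

lemma LQ_apply (z h : E k) :
    LQ k z h = ∑ j : Fin 2, 2 * z (Fin.natAdd k j) * h (Fin.natAdd k j) := by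
  simp [LQ, mul_assoc]

lemma hasFDerivAt_Uf (z : E k) : HasFDerivAt (Uf k) (LU k z) z := by
  have h : ∀ i : Fin k, HasFDerivAt (fun w : E k => w (Fin.castAdd 2 i) ^ 2)
      ((2 * z (Fin.castAdd 2 i)) • (EuclideanSpace.proj (Fin.castAdd 2 i) : E k →L[ℝ] ℝ)) z := by
    intro i
    have hp : HasFDerivAt (fun w : E k => w (Fin.castAdd 2 i))
        (EuclideanSpace.proj (Fin.castAdd 2 i) : E k →L[ℝ] ℝ) z :=
      (EuclideanSpace.proj (Fin.castAdd 2 i) : E k →L[ℝ] ℝ).hasFDerivAt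
    have := hp.mul hp
    refine (this.congr_fderiv ?_).congr_of_eventuallyEq (Filter.Eventually.of_forall fun w => ?_)
    · rw [two_mul, add_smul]
    · simp [sq]
  exact HasFDerivAt.fun_sum (fun i (_ : i ∈ Finset.univ) => h i)

lemma hasFDerivAt_Qf (z : E k) : HasFDerivAt (Qf k) (LQ k z) z := by
  have h : ∀ j : Fin 2, HasFDerivAt (fun w : E k => w (Fin.natAdd k j) ^ 2)
      ((2 * z (Fin.natAdd k j)) • (EuclideanSpace.proj (Fin.natAdd k j) : E k →L[ℝ] ℝ)) z := by
    intro j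
    have hp : HasFDerivAt (fun w : E k => w (Fin.natAdd k j))
        (EuclideanSpace.proj (Fin.natAdd k j) : E k →L[ℝ] ℝ) z :=
      (EuclideanSpace.proj (Fin.natAdd k j) : E k →L[ℝ] ℝ).hasFDerivAt
    have := hp.mul hp
    refine (this.congr_fderiv ?_).congr_of_eventuallyEq (Filter.Eventually.of_forall fun w => ?_)
    · rw [two_mul, add_smul]
    · simp [sq]
  exact HasFDerivAt.fun_sum (fun j (_ : j ∈ Finset.univ) => h j)

def Pl (k : ℕ) : E k →ₗ[ℝ] E k where
  toFun w := WithLp.toLp 2 (fun j => if (j : ℕ) < k then w j else 0 : Fin (k+2) → ℝ)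
  map_add' w w' := by ext j; by_cases h : (j : ℕ) < k <;> simp [h, PiLp.add_apply]
  map_smul' c w := by ext j; by_cases h : (j : ℕ) < k <;> simp [h, PiLp.smul_apply]

def Pc (k : ℕ) : E k →L[ℝ] E k := (Pl k).toContinuousLinearMap

def Ql (k : ℕ) : E k →ₗ[ℝ] E k where
  toFun w := WithLp.toLp 2 (fun j => if (j : ℕ) < k then 0 else w j : Fin (k+2) → ℝ)
  map_add' w w' := by ext j; by_cases h : (j : ℕ) < k <;> simp [h, PiLp.add_apply]
  map_smul' c w := by ext j; by_cases h : (j : ℕ) < k <;> simp [h, PiLp.smul_apply]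

def Qc (k : ℕ) : E k →L[ℝ] E k := (Ql k).toContinuousLinearMap

lemma Pc_apply (w : E k) (j : Fin (k+2)) : Pc k w j = if (j : ℕ) < k then w j else 0 := rfl
lemma Qc_apply (w : E k) (j : Fin (k+2)) : Qc k w j = if (j : ℕ) < k then 0 else w j := rfl

def av (k : ℕ) (w : E k) : ℝ :=
  (1/4 : ℝ) * (Uf k w ^ ((1:ℝ)/2) * (5 * Uf k w - 3 * (((k:ℝ)-1) * Qf k w)))
def bv (k : ℕ) (w : E k) : ℝ :=
  (-(1/2) : ℝ) * (((k:ℝ)-1) * (Uf k w * Uf k w ^ ((1:ℝ)/2)))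
def Gv (k : ℕ) (w : E k) : E k := av k w • Pc k w + bv k w • Qc k w

def Nf (k : ℕ) (w : E k) : ℝ :=
  1 / 16 * Uf k w ^ 2 *
    (25 * Uf k w ^ 2 + 2 * (2 * (k : ℝ) - 17) * Uf k w * (((k:ℝ)-1) * Qf k w)
      + 9 * (((k:ℝ)-1) * Qf k w) ^ 2)

lemma Gv_apply (w : E k) (j : Fin (k+2)) :
    Gv k w j = if (j : ℕ) < k then av k w * w j else bv k w * w j := by
  by_cases h : (j : ℕ) < k <;>
    simp [Gv, PiLp.add_apply, PiLp.smul_apply, Pc_apply, Qc_apply, h]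

lemma uu_eq (w : E k) : uu k w = Uf k w := by
  rw [uu, nX, Real.sq_sqrt]; · rfl
  · exact Finset.sum_nonneg fun _ _ => sq_nonneg _

lemma vv_eq (w : E k) : vv k w = ((k:ℝ)-1) * Qf k w := by
  rw [vv, nY, Real.sq_sqrt]; · rfl
  · exact Finset.sum_nonneg fun _ _ => sq_nonneg _

lemma fp_eq :
    fp k = fun w => (1/4 : ℝ) * ((Uf k w - ((k:ℝ)-1) * Qf k w) * Uf k w ^ ((3:ℝ)/2)) := by
  funext w; rw [fp, uu_eq, vv_eq]; ring

lemma hasGradientAt_fp (z : E k) (hu : 0 < Uf k z) :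
    HasGradientAt (fp k) (Gv k z) z := by
  have h1 : HasFDerivAt (fun w : E k => Uf k w - ((k:ℝ)-1) * Qf k w)
      (LU k z - ((k:ℝ)-1) • LQ k z) z :=
    (hasFDerivAt_Uf z).sub ((hasFDerivAt_Qf z).const_mul _)
  have h2 : HasFDerivAt (fun w : E k => Uf k w ^ ((3:ℝ)/2))
      (((3:ℝ)/2 * Uf k z ^ ((3:ℝ)/2 - 1)) • LU k z) z :=
    (hasFDerivAt_Uf z).rpow_const (Or.inl hu.ne')
  have h3 := (h1.mul h2).const_mul ((1:ℝ)/4)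
  rw [hasGradientAt_iff_hasFDerivAt, fp_eq]
  refine h3.congr_fderiv ?_
  have e1 : (3:ℝ)/2 - 1 = 1/2 := by norm_num
  have e2 : Uf k z ^ ((3:ℝ)/2) = Uf k z * Uf k z ^ ((1:ℝ)/2) := by
    rw [show (3:ℝ)/2 = 1 + 1/2 by norm_num, Real.rpow_add hu, Real.rpow_one]
  ext h
  rw [InnerProductSpace.toDual_apply_apply, PiLp.inner_apply]
  simp only [RCLike.inner_apply', conj_trivial]
  rw [Fin.sum_univ_add]
  simp only [Gv_apply]
  have hc : ∀ i : Fin k, ((Fin.castAdd 2 i : Fin (k+2)) : ℕ) < k := fun i => i.isLt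
  have hn : ∀ j : Fin 2, ¬ (((Fin.natAdd k j : Fin (k+2)) : ℕ) < k) := fun j => by
    simp [Fin.natAdd]
  simp only [ContinuousLinearMap.smul_apply, ContinuousLinearMap.add_apply,
    ContinuousLinearMap.coe_smul', Pi.smul_apply, ContinuousLinearMap.sub_apply,
    ContinuousLinearMap.coe_sub', Pi.sub_apply, LU_apply, LQ_apply, smul_eq_mul,
    hc, hn, if_pos, if_neg, if_true, if_false]
  simp only [av, bv, mul_assoc, ← Finset.mul_sum]
  rw [e1, e2]
  ring

lemma norm_Gv_sq (w : E k) : ‖Gv k w‖ ^ 2 = Nf k w := by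
  have hu := Uf_nonneg (k := k) w
  have hs : (Uf k w ^ ((1:ℝ)/2)) ^ 2 = Uf k w := by
    rw [← Real.rpow_natCast (Uf k w ^ ((1:ℝ)/2)) 2, ← Real.rpow_mul hu]
    norm_num
  rw [EuclideanSpace.norm_eq, Real.sq_sqrt (by positivity)]
  have hsplit : ∑ j : Fin (k+2), ‖Gv k w j‖ ^ 2
      = av k w ^ 2 * Uf k w + bv k w ^ 2 * Qf k w := by
    have hc : ∀ i : Fin k, ((Fin.castAdd 2 i : Fin (k+2)) : ℕ) < k := fun i => i.isLt
    have hn : ∀ j : Fin 2, ¬ (((Fin.natAdd k j : Fin (k+2)) : ℕ) < k) := fun j => by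
      simp [Fin.natAdd]
    rw [Fin.sum_univ_add]
    simp only [Gv_apply, hc, hn, if_pos, if_neg, if_true, if_false,
      Real.norm_eq_abs, sq_abs, mul_pow, Uf, Qf, Finset.mul_sum]
  rw [hsplit, Nf, av, bv]
  linear_combination ((5 * Uf k w - 3 * (((k:ℝ)-1) * Qf k w))^2 * Uf k w / 16
    + ((k:ℝ)-1)^2 * (Uf k w)^2 * Qf k w / 4) * hs

lemma continuous_Uf : Continuous (Uf k) := by
  refine continuous_finset_sum _ fun i _ => ?_
  exact ((EuclideanSpace.proj (Fin.castAdd 2 i) : E k →L[ℝ] ℝ).continuous).pow 2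

lemma continuous_Qf : Continuous (Qf k) := by
  refine continuous_finset_sum _ fun j _ => ?_
  exact ((EuclideanSpace.proj (Fin.natAdd k j) : E k →L[ℝ] ℝ).continuous).pow 2

lemma isOpen_region : IsOpen {w : E k | ((k:ℝ)-1) * Qf k w < Uf k w} :=
  isOpen_lt (continuous_const.mul continuous_Qf) continuous_Uf

lemma Uf_pos_of_region (hk : 2 ≤ k) (w : E k) (hw : ((k:ℝ)-1) * Qf k w < Uf k w) :
    0 < Uf k w := by
  have h1 : (0:ℝ) ≤ ((k:ℝ)-1) * Qf k w := by
    have : (1:ℝ) ≤ (k:ℝ) := by exact_mod_cast Nat.one_le_of_lt hk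
    have := Qf_nonneg (k := k) w
    nlinarith
  linarith

lemma Nf_pos (hk7 : 7 ≤ k) (hk11 : k ≤ 11) (w : E k)
    (hw : ((k:ℝ)-1) * Qf k w < Uf k w) : 0 < Nf k w := by
  have hu : 0 < Uf k w := Uf_pos_of_region (by omega) w hw
  have hq : 0 ≤ Qf k w := Qf_nonneg w
  have hkk : (7:ℝ) ≤ (k:ℝ) := by exact_mod_cast hk7
  have hv : 0 ≤ ((k:ℝ)-1) * Qf k w := by nlinarith
  have h6 : (0:ℝ) ≤ 2*(2*(k:ℝ)-17) + 6 := by linarith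
  have hin : 0 < 25 * Uf k w ^ 2 + 2 * (2 * (k : ℝ) - 17) * Uf k w * (((k:ℝ)-1) * Qf k w)
      + 9 * (((k:ℝ)-1) * Qf k w) ^ 2 := by
    nlinarith [mul_nonneg h6 (mul_nonneg hu.le hv), sq_nonneg (3 * Uf k w - ((k:ℝ)-1) * Qf k w),
      mul_pos hu hu]
  rw [Nf]
  have := mul_pos (mul_pos (by norm_num : (0:ℝ) < 1/16) (pow_pos hu 2)) hin
  linarith

lemma norm_Gv (w : E k) : ‖Gv k w‖ = Real.sqrt (Nf k w) := by
  rw [← norm_Gv_sq, Real.sqrt_sq (norm_nonneg _)]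

lemma inv_norm_Gv (w : E k) (hN : 0 < Nf k w) :
    ‖Gv k w‖⁻¹ = Nf k w ^ (-(1:ℝ)/2) := by
  rw [norm_Gv, Real.sqrt_eq_rpow, show (-(1:ℝ)/2) = -(1/2) by norm_num,
    Real.rpow_neg hN.le]

-- evaluation lemmas for basis vectors
lemma coe_castAdd_lt (i : Fin k) : ((Fin.castAdd 2 i : Fin (k+2)) : ℕ) < k := i.isLt
lemma coe_natAdd_not_lt (j : Fin 2) : ¬ (((Fin.natAdd k j : Fin (k+2)) : ℕ) < k) := by
  simp [Fin.natAdd]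

lemma castAdd_ne_natAdd (i : Fin k) (j : Fin 2) :
    (Fin.castAdd 2 i : Fin (k+2)) ≠ Fin.natAdd k j := by
  intro h
  have := congrArg (Fin.val) h
  simp only [Fin.coe_castAdd, Fin.coe_natAdd] at this
  have := i.isLt
  omega

lemma LU_single_cast (z : E k) (i : Fin k) :
    LU k z (EuclideanSpace.single (Fin.castAdd 2 i) (1:ℝ)) = 2 * z (Fin.castAdd 2 i) := by
  rw [LU_apply]
  rw [Finset.sum_eq_single i]
  · simp [EuclideanSpace.single_apply]
  · intro b _ hb
    rw [EuclideanSpace.single_apply, if_neg, mul_zero]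
    exact fun h => hb (Fin.castAdd_injective k 2 h)
  · simp

lemma LU_single_nat (z : E k) (j : Fin 2) :
    LU k z (EuclideanSpace.single (Fin.natAdd k j) (1:ℝ)) = 0 := by
  rw [LU_apply]
  apply Finset.sum_eq_zero
  intro i _
  rw [EuclideanSpace.single_apply, if_neg (castAdd_ne_natAdd i j), mul_zero]

lemma LQ_single_cast (z : E k) (i : Fin k) :
    LQ k z (EuclideanSpace.single (Fin.castAdd 2 i) (1:ℝ)) = 0 := by
  rw [LQ_apply]
  apply Finset.sum_eq_zero
  intro j _
  rw [EuclideanSpace.single_apply, if_neg (fun h => (castAdd_ne_natAdd i j) h.symm), mul_zero]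

lemma LQ_single_nat (z : E k) (j : Fin 2) :
    LQ k z (EuclideanSpace.single (Fin.natAdd k j) (1:ℝ)) = 2 * z (Fin.natAdd k j) := by
  rw [LQ_apply]
  rw [Finset.sum_eq_single j]
  · simp [EuclideanSpace.single_apply]
  · intro b _ hb
    rw [EuclideanSpace.single_apply, if_neg, mul_zero]
    exact fun h => hb (Fin.ext (by have := congrArg Fin.val h; simp only [Fin.coe_natAdd] at this; omega))
  · simp

lemma Pc_single_cast (i : Fin k) :
    Pc k (EuclideanSpace.single (Fin.castAdd 2 i) (1:ℝ)) (Fin.castAdd 2 i) = 1 := by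
  rw [Pc_apply, if_pos (coe_castAdd_lt i), EuclideanSpace.single_apply, if_pos rfl]

lemma Pc_single_nat (j : Fin 2) :
    Pc k (EuclideanSpace.single (Fin.natAdd k j) (1:ℝ)) (Fin.natAdd k j) = 0 := by
  rw [Pc_apply, if_neg (coe_natAdd_not_lt j)]

lemma Qc_single_cast (i : Fin k) :
    Qc k (EuclideanSpace.single (Fin.castAdd 2 i) (1:ℝ)) (Fin.castAdd 2 i) = 0 := by
  rw [Qc_apply, if_pos (coe_castAdd_lt i)]

lemma Qc_single_nat (j : Fin 2) :
    Qc k (EuclideanSpace.single (Fin.natAdd k j) (1:ℝ)) (Fin.natAdd k j) = 1 := by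
  rw [Qc_apply, if_neg (coe_natAdd_not_lt j), EuclideanSpace.single_apply, if_pos rfl]

lemma Pc_self_cast (z : E k) (i : Fin k) :
    Pc k z (Fin.castAdd 2 i) = z (Fin.castAdd 2 i) := by
  rw [Pc_apply, if_pos (coe_castAdd_lt i)]

lemma Pc_self_nat (z : E k) (j : Fin 2) : Pc k z (Fin.natAdd k j) = 0 := by
  rw [Pc_apply, if_neg (coe_natAdd_not_lt j)]

lemma Qc_self_cast (z : E k) (i : Fin k) : Qc k z (Fin.castAdd 2 i) = 0 := by
  rw [Qc_apply, if_pos (coe_castAdd_lt i)]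

lemma Qc_self_nat (z : E k) (j : Fin 2) :
    Qc k z (Fin.natAdd k j) = z (Fin.natAdd k j) := by
  rw [Qc_apply, if_neg (coe_natAdd_not_lt j)]

-- trace of a CLM on EuclideanSpace
theorem trace_clm {n : ℕ} (T : EuclideanSpace ℝ (Fin n) →L[ℝ] EuclideanSpace ℝ (Fin n)) :
    LinearMap.trace ℝ _ T.toLinearMap = ∑ i, T (EuclideanSpace.single i 1) i := by
  rw [LinearMap.trace_eq_matrix_trace ℝ (EuclideanSpace.basisFun (Fin n) ℝ).toBasis]
  rw [Matrix.trace]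
  congr 1

-- normalized field data
def cA (k : ℕ) (w : E k) : ℝ := Nf k w ^ (-(1:ℝ)/2) * av k w
def cB (k : ℕ) (w : E k) : ℝ := Nf k w ^ (-(1:ℝ)/2) * bv k w
def phi (k : ℕ) (w : E k) : E k := cA k w • Pc k w + cB k w • Qc k w

def nuU (k : ℕ) (z : E k) : ℝ :=
  1/16 * (2 * Uf k z * (25 * Uf k z ^ 2 + 2 * (2 * (k : ℝ) - 17) * Uf k z * (((k:ℝ)-1) * Qf k z)
      + 9 * (((k:ℝ)-1) * Qf k z) ^ 2)
    + Uf k z ^ 2 * (50 * Uf k z + 2 * (2 * (k : ℝ) - 17) * (((k:ℝ)-1) * Qf k z)))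

def nuQ (k : ℕ) (z : E k) : ℝ :=
  1/16 * (Uf k z ^ 2 * (2 * (2 * (k : ℝ) - 17) * Uf k z * ((k:ℝ)-1)
      + 18 * (((k:ℝ)-1) * Qf k z) * ((k:ℝ)-1)))

def alA (k : ℕ) (z : E k) : ℝ :=
  Nf k z ^ (-(1:ℝ)/2) * (1/4 * (1/2 * Uf k z ^ ((1:ℝ)/2 - 1)
      * (5 * Uf k z - 3 * (((k:ℝ)-1) * Qf k z)) + Uf k z ^ ((1:ℝ)/2) * 5))
    + av k z * (-(1:ℝ)/2 * Nf k z ^ (-(1:ℝ)/2 - 1)) * nuU k z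

def gaB (k : ℕ) (z : E k) : ℝ :=
  bv k z * (-(1:ℝ)/2 * Nf k z ^ (-(1:ℝ)/2 - 1)) * nuQ k z

lemma hasFDerivAt_Nf (z : E k) :
    HasFDerivAt (Nf k) (nuU k z • LU k z + nuQ k z • LQ k z) z := by
  have hU := hasFDerivAt_Uf z
  have hQ := hasFDerivAt_Qf z
  have h_in := ((hU.mul hU).const_mul (25:ℝ)).add
    (((hU.mul (hQ.const_mul ((k:ℝ)-1))).const_mul (2 * (2 * (k : ℝ) - 17))).add
      (((hQ.const_mul ((k:ℝ)-1)).mul (hQ.const_mul ((k:ℝ)-1))).const_mul (9:ℝ)))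
  have hNraw := ((hU.mul hU).mul h_in).const_mul ((1:ℝ)/16)
  refine (hNraw.congr_fderiv ?_).congr_of_eventuallyEq (Filter.Eventually.of_forall fun w => ?_)
  · ext h
    simp only [ContinuousLinearMap.add_apply, ContinuousLinearMap.smul_apply,
      ContinuousLinearMap.coe_smul', Pi.smul_apply, smul_eq_mul, nuU, nuQ, Pi.mul_apply, Pi.add_apply]
    ring
  · simp only [Nf, Pi.mul_apply, Pi.add_apply]; ring

lemma hasFDerivAt_cA (z : E k) (hu : 0 < Uf k z) (hN : 0 < Nf k z) :
    ∃ gA : ℝ, HasFDerivAt (cA k) (alA k z • LU k z + gA • LQ k z) z := by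
  have hU := hasFDerivAt_Uf z
  have hQ := hasFDerivAt_Qf z
  have hs := hU.rpow_const (p := (1:ℝ)/2) (Or.inl hu.ne')
  have hlin := (hU.const_mul (5:ℝ)).sub ((hQ.const_mul ((k:ℝ)-1)).const_mul (3:ℝ))
  have hav := (hs.mul hlin).const_mul ((1:ℝ)/4)
  have hNp := (hasFDerivAt_Nf z).rpow_const (p := -(1:ℝ)/2) (Or.inl hN.ne')
  have hcA := hNp.mul hav
  refine ⟨Nf k z ^ (-(1:ℝ)/2) * (1/4 * (Uf k z ^ ((1:ℝ)/2) * (-3 * ((k:ℝ)-1))))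
    + av k z * (-(1:ℝ)/2 * Nf k z ^ (-(1:ℝ)/2 - 1)) * nuQ k z, ?_⟩
  refine hcA.congr_fderiv ?_
  ext h
  simp only [ContinuousLinearMap.add_apply, ContinuousLinearMap.smul_apply,
    ContinuousLinearMap.coe_smul', Pi.smul_apply, ContinuousLinearMap.sub_apply,
    ContinuousLinearMap.coe_sub', Pi.sub_apply, smul_eq_mul, alA, av, Pi.mul_apply]
  ring

lemma hasFDerivAt_cB (z : E k) (hu : 0 < Uf k z) (hN : 0 < Nf k z) :
    ∃ aB : ℝ, HasFDerivAt (cB k) (aB • LU k z + gaB k z • LQ k z) z := by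
  have hU := hasFDerivAt_Uf z
  have hs := hU.rpow_const (p := (1:ℝ)/2) (Or.inl hu.ne')
  have hbv := ((hU.mul hs).const_mul ((k:ℝ)-1)).const_mul (-(1/2) : ℝ)
  have hNp := (hasFDerivAt_Nf z).rpow_const (p := -(1:ℝ)/2) (Or.inl hN.ne')
  have hcB := hNp.mul hbv
  refine ⟨Nf k z ^ (-(1:ℝ)/2) * (-(1/2) * (((k:ℝ)-1) * (Uf k z * (1/2 * Uf k z ^ ((1:ℝ)/2 - 1))
      + Uf k z ^ ((1:ℝ)/2))))
    + bv k z * (-(1:ℝ)/2 * Nf k z ^ (-(1:ℝ)/2 - 1)) * nuU k z, ?_⟩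
  refine hcB.congr_fderiv ?_
  ext h
  simp only [ContinuousLinearMap.add_apply, ContinuousLinearMap.smul_apply,
    ContinuousLinearMap.coe_smul', Pi.smul_apply, smul_eq_mul, gaB, bv, Pi.mul_apply]
  ring

lemma divg_phi (z : E k) (hu : 0 < Uf k z) (hN : 0 < Nf k z) :
    divg (phi k) z = (k:ℝ) * cA k z + 2 * cB k z
      + 2 * Uf k z * alA k z + 2 * Qf k z * gaB k z := by
  obtain ⟨gA, hcA⟩ := hasFDerivAt_cA z hu hN
  obtain ⟨aB, hcB⟩ := hasFDerivAt_cB z hu hN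
  have hPc : HasFDerivAt (fun w : E k => Pc k w) (Pc k) z := (Pc k).hasFDerivAt
  have hQc : HasFDerivAt (fun w : E k => Qc k w) (Qc k) z := (Qc k).hasFDerivAt
  have hphi : HasFDerivAt (phi k)
      ((cA k z • Pc k + (alA k z • LU k z + gA • LQ k z).smulRight (Pc k z))
        + (cB k z • Qc k + (aB • LU k z + gaB k z • LQ k z).smulRight (Qc k z))) z :=
    (hcA.smul hPc).add (hcB.smul hQc)
  rw [divg, hphi.fderiv, trace_clm, Fin.sum_univ_add]
  have hfirst : ∀ i : Fin k,
      ((cA k z • Pc k + (alA k z • LU k z + gA • LQ k z).smulRight (Pc k z))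
        + (cB k z • Qc k + (aB • LU k z + gaB k z • LQ k z).smulRight (Qc k z)))
        (EuclideanSpace.single (Fin.castAdd 2 i) 1) (Fin.castAdd 2 i)
      = cA k z + alA k z * (2 * z (Fin.castAdd 2 i)) * z (Fin.castAdd 2 i) := by
    intro i
    simp only [ContinuousLinearMap.add_apply, ContinuousLinearMap.smul_apply,
      ContinuousLinearMap.smulRight_apply, PiLp.add_apply, PiLp.smul_apply,
      smul_eq_mul, Pc_single_cast, Qc_single_cast, Pc_self_cast, Qc_self_cast,
      LU_single_cast, LQ_single_cast, EuclideanSpace.single_apply, if_pos]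
    ring
  have hsecond : ∀ j : Fin 2,
      ((cA k z • Pc k + (alA k z • LU k z + gA • LQ k z).smulRight (Pc k z))
        + (cB k z • Qc k + (aB • LU k z + gaB k z • LQ k z).smulRight (Qc k z)))
        (EuclideanSpace.single (Fin.natAdd k j) 1) (Fin.natAdd k j)
      = cB k z + gaB k z * (2 * z (Fin.natAdd k j)) * z (Fin.natAdd k j) := by
    intro j
    simp only [ContinuousLinearMap.add_apply, ContinuousLinearMap.smul_apply,
      ContinuousLinearMap.smulRight_apply, PiLp.add_apply, PiLp.smul_apply,
      smul_eq_mul, Pc_single_nat, Qc_single_nat, Pc_self_nat, Qc_self_nat,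
      LU_single_nat, LQ_single_nat, EuclideanSpace.single_apply, if_pos]
    ring
  rw [Finset.sum_congr rfl (fun i _ => hfirst i), Finset.sum_congr rfl (fun j _ => hsecond j)]
  rw [Finset.sum_add_distrib, Finset.sum_add_distrib]
  have e1 : ∑ i : Fin k, alA k z * (2 * z (Fin.castAdd 2 i)) * z (Fin.castAdd 2 i)
      = 2 * alA k z * Uf k z := by
    rw [Uf, Finset.mul_sum]
    apply Finset.sum_congr rfl
    intro i _
    rw [pow_two]; ring
  have e2 : ∑ j : Fin 2, gaB k z * (2 * z (Fin.natAdd k j)) * z (Fin.natAdd k j)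
      = 2 * gaB k z * Qf k z := by
    rw [Qf, Finset.mul_sum]
    apply Finset.sum_congr rfl
    intro j _
    rw [pow_two]; ring
  rw [e1, e2]
  simp [Finset.sum_const]
  ring


end Aux14


/-- The explicit formula for `div g` and `|∇f₊|^2` on `{u > v}` for `(h,k) = (2,k)`
with `d = 3/2` (Section 3.3 of the paper). -/
theorem stmt14 (k : ℕ) (hk7 : 7 ≤ k) (hk11 : k ≤ 11)
    (z : EuclideanSpace ℝ (Fin (k + 2))) (hz : vv k z < uu k z) :
    divg (fun w => ‖gradient (fp k) w‖⁻¹ • gradient (fp k) w) z =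
        (1 / 64 * ((k : ℝ) - 1) * uu k z ^ ((5 : ℝ) / 2) * (uu k z - vv k z) *
            (25 * uu k z ^ 2 + 12 * ((k : ℝ) - 11) * uu k z * vv k z + 27 * vv k z ^ 2))
          / (1 / 16 * uu k z ^ 2 *
              (25 * uu k z ^ 2 + 2 * (2 * (k : ℝ) - 17) * uu k z * vv k z
                + 9 * vv k z ^ 2)) ^ ((3 : ℝ) / 2) ∧
      ‖gradient (fp k) z‖ ^ 2 =
        1 / 16 * uu k z ^ 2 *
          (25 * uu k z ^ 2 + 2 * (2 * (k : ℝ) - 17) * uu k z * vv k z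
            + 9 * vv k z ^ 2) := by
  have hz' : ((k:ℝ)-1) * Aux14.Qf k z < Aux14.Uf k z := by
    rw [← Aux14.uu_eq, ← Aux14.vv_eq]; exact hz
  have hu : 0 < Aux14.Uf k z := Aux14.Uf_pos_of_region (by omega) z hz'
  have hN : 0 < Aux14.Nf k z := Aux14.Nf_pos hk7 hk11 z hz'
  have hNdef : Aux14.Nf k z = 1 / 16 * Aux14.Uf k z ^ 2 *
      (25 * Aux14.Uf k z ^ 2
        + 2 * (2 * (k : ℝ) - 17) * Aux14.Uf k z * (((k:ℝ)-1) * Aux14.Qf k z)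
        + 9 * (((k:ℝ)-1) * Aux14.Qf k z) ^ 2) := rfl
  constructor
  · have hev : (fun w => ‖gradient (fp k) w‖⁻¹ • gradient (fp k) w) =ᶠ[nhds z]
        Aux14.phi k := by
      filter_upwards [Aux14.isOpen_region.mem_nhds hz'] with w hw
      have huw : 0 < Aux14.Uf k w := Aux14.Uf_pos_of_region (by omega) w hw
      have hNw : 0 < Aux14.Nf k w := Aux14.Nf_pos hk7 hk11 w hw
      rw [(Aux14.hasGradientAt_fp w huw).gradient, Aux14.inv_norm_Gv w hNw]
      simp [Aux14.phi, Aux14.cA, Aux14.cB, Aux14.Gv, smul_add, smul_smul]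
    have hstep : divg (fun w => ‖gradient (fp k) w‖⁻¹ • gradient (fp k) w) z
        = divg (Aux14.phi k) z := by
      unfold divg
      rw [hev.fderiv_eq]
    rw [hstep, Aux14.divg_phi z hu hN]
    -- now pure algebra
    rw [Aux14.uu_eq, Aux14.vv_eq, ← hNdef]
    have hT : 0 < Aux14.Nf k z ^ ((3:ℝ)/2) := Real.rpow_pos_of_pos hN _
    have e1 : Aux14.Nf k z ^ (-(1:ℝ)/2) = Aux14.Nf k z / Aux14.Nf k z ^ ((3:ℝ)/2) := by
      rw [show (-(1:ℝ)/2) = 1 - 3/2 by norm_num, Real.rpow_sub hN, Real.rpow_one]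
    have e2 : Aux14.Nf k z ^ (-(1:ℝ)/2 - 1) = 1 / Aux14.Nf k z ^ ((3:ℝ)/2) := by
      rw [show (-(1:ℝ)/2 - 1) = 0 - 3/2 by norm_num, Real.rpow_sub hN, Real.rpow_zero]
    have e3 : Aux14.Uf k z ^ ((1:ℝ)/2 - 1) = Aux14.Uf k z ^ ((1:ℝ)/2) / Aux14.Uf k z := by
      rw [Real.rpow_sub hu, Real.rpow_one]
    have e4 : Aux14.Uf k z ^ ((5:ℝ)/2) = Aux14.Uf k z ^ 2 * Aux14.Uf k z ^ ((1:ℝ)/2) := by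
      rw [show ((5:ℝ)/2) = ((2:ℕ):ℝ) + (1:ℝ)/2 by norm_num, Real.rpow_add hu,
        Real.rpow_natCast]
    have e5 : (Aux14.Uf k z ^ ((1:ℝ)/2)) ^ 2 = Aux14.Uf k z := by
      rw [← Real.rpow_natCast (Aux14.Uf k z ^ ((1:ℝ)/2)) 2, ← Real.rpow_mul hu.le]
      norm_num
    simp only [Aux14.cA, Aux14.cB, Aux14.alA, Aux14.gaB, Aux14.av, Aux14.bv,
      Aux14.nuU, Aux14.nuQ]
    rw [e1, e2, e3, e4]
    set s := Aux14.Uf k z ^ ((1:ℝ)/2) with hsdef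
    set T := Aux14.Nf k z ^ ((3:ℝ)/2) with hTdef
    have hs0 : 0 < s := Real.rpow_pos_of_pos hu _
    rw [hNdef, ← e5]
    have hT0 : T ≠ 0 := hT.ne'
    field_simp
    ring
  · rw [(Aux14.hasGradientAt_fp z hu).gradient, Aux14.norm_Gv_sq,
      Aux14.uu_eq, Aux14.vv_eq]
    exact hNdef
end
end

section
/- Fix an integer k with 7 ≤ k ≤ 11 and set h = 2. For z = (x,y) ∈ ℝ^k × ℝ^2 write u = |x|^2, v = (k−1)|y|^2, and let f(x,y) = (u − v)v/4 and g = ∇f/|∇f|. Then at every point with u < v, div g = [ (1/8)(k−1)(u − v) v ( (k−1)u^2 + (3−4k)uv + 4(k−2)v^2 ) ] / [ (1/4) v ( (k−1)(u − 2v)^2 + uv ) ]^{3/2}; in particular |∇f|^2 = (1/4) v ( (k−1)(u − 2v)^2 + uv ) there. -/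
open MeasureTheory
open scoped RealInnerProductSpace ENNReal

noncomputable section

/- index lemmas -/
lemma fin_cast_ne_nat {k : ℕ} (i : Fin k) (j : Fin 2) :
    Fin.castAdd 2 i ≠ Fin.natAdd k j := by
  simp only [Fin.ne_iff_vne, Fin.coe_castAdd, Fin.coe_natAdd]; omega

lemma euc_sum_apply {n : ℕ} {ι : Type*} (s : Finset ι) (f : ι → EuclideanSpace ℝ (Fin n)) (m : Fin n) :
    (∑ i ∈ s, f i) m = ∑ i ∈ s, f i m := by
  induction s using Finset.cons_induction with
  | empty => rfl
  | cons a s ha ih => rw [Finset.sum_cons, Finset.sum_cons, PiLp.add_apply, ih]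

/- scalar coordinate functions -/
def Uf (k : ℕ) (z : EuclideanSpace ℝ (Fin (k+2))) : ℝ := ∑ i : Fin k, (z (Fin.castAdd 2 i))^2
def Sf (k : ℕ) (z : EuclideanSpace ℝ (Fin (k+2))) : ℝ := ∑ j : Fin 2, (z (Fin.natAdd k j))^2
def Vf (k : ℕ) (z : EuclideanSpace ℝ (Fin (k+2))) : ℝ := ((k:ℝ)-1) * Sf k z

/- projections -/
def PX (k : ℕ) : EuclideanSpace ℝ (Fin (k+2)) →L[ℝ] EuclideanSpace ℝ (Fin (k+2)) :=
  ∑ i : Fin k, (EuclideanSpace.proj (Fin.castAdd 2 i)).smulRight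
    (EuclideanSpace.single (Fin.castAdd 2 i) 1)
def PY (k : ℕ) : EuclideanSpace ℝ (Fin (k+2)) →L[ℝ] EuclideanSpace ℝ (Fin (k+2)) :=
  ∑ j : Fin 2, (EuclideanSpace.proj (Fin.natAdd k j)).smulRight
    (EuclideanSpace.single (Fin.natAdd k j) 1)

lemma PX_cast {k : ℕ} (w : EuclideanSpace ℝ (Fin (k+2))) (i : Fin k) :
    PX k w (Fin.castAdd 2 i) = w (Fin.castAdd 2 i) := by
  simp only [PX, ContinuousLinearMap.sum_apply, ContinuousLinearMap.smulRight_apply,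
    euc_sum_apply, PiLp.smul_apply, EuclideanSpace.single_apply, smul_eq_mul]
  rw [Finset.sum_eq_single i]
  · simp
  · intro b _ hb; rw [if_neg (by simpa [Fin.ext_iff] using hb.symm ∘ Fin.val_injective.eq_iff.mp ∘ id), mul_zero]
  · simp
lemma PX_nat {k : ℕ} (w : EuclideanSpace ℝ (Fin (k+2))) (j : Fin 2) :
    PX k w (Fin.natAdd k j) = 0 := by
  simp only [PX, ContinuousLinearMap.sum_apply, ContinuousLinearMap.smulRight_apply,
    euc_sum_apply, PiLp.smul_apply, EuclideanSpace.single_apply, smul_eq_mul]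
  apply Finset.sum_eq_zero; intro b _
  rw [if_neg (fin_cast_ne_nat b j).symm, mul_zero]
lemma PY_cast {k : ℕ} (w : EuclideanSpace ℝ (Fin (k+2))) (i : Fin k) :
    PY k w (Fin.castAdd 2 i) = 0 := by
  simp only [PY, ContinuousLinearMap.sum_apply, ContinuousLinearMap.smulRight_apply,
    euc_sum_apply, PiLp.smul_apply, EuclideanSpace.single_apply, smul_eq_mul]
  apply Finset.sum_eq_zero; intro b _
  rw [if_neg (fin_cast_ne_nat i b), mul_zero]
lemma PY_nat {k : ℕ} (w : EuclideanSpace ℝ (Fin (k+2))) (j : Fin 2) :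
    PY k w (Fin.natAdd k j) = w (Fin.natAdd k j) := by
  simp only [PY, ContinuousLinearMap.sum_apply, ContinuousLinearMap.smulRight_apply,
    euc_sum_apply, PiLp.smul_apply, EuclideanSpace.single_apply, smul_eq_mul]
  rw [Finset.sum_eq_single j]
  · simp
  · intro b _ hb; rw [if_neg (by simp [Fin.ext_iff]; omega), mul_zero]
  · simp

/- derivatives of U and V -/
def dU (k : ℕ) (z : EuclideanSpace ℝ (Fin (k+2))) : EuclideanSpace ℝ (Fin (k+2)) →L[ℝ] ℝ :=
  ∑ i : Fin k, (2 * z (Fin.castAdd 2 i)) • EuclideanSpace.proj (Fin.castAdd 2 i)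
def dV (k : ℕ) (z : EuclideanSpace ℝ (Fin (k+2))) : EuclideanSpace ℝ (Fin (k+2)) →L[ℝ] ℝ :=
  ∑ j : Fin 2, (2 * ((k:ℝ)-1) * z (Fin.natAdd k j)) • EuclideanSpace.proj (Fin.natAdd k j)

lemma hasU {k : ℕ} (z : EuclideanSpace ℝ (Fin (k+2))) : HasFDerivAt (Uf k) (dU k z) z := by
  have h : ∀ i : Fin k, HasFDerivAt (fun w : EuclideanSpace ℝ (Fin (k+2)) => (w (Fin.castAdd 2 i))^2)
      ((2 * z (Fin.castAdd 2 i)) • EuclideanSpace.proj (Fin.castAdd 2 i) :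
        EuclideanSpace ℝ (Fin (k+2)) →L[ℝ] ℝ) z := by
    intro i
    have hp := (EuclideanSpace.proj (Fin.castAdd 2 i) :
        EuclideanSpace ℝ (Fin (k+2)) →L[ℝ] ℝ).hasFDerivAt (x := z)
    have := hp.fun_mul hp
    have h2 : (fun w : EuclideanSpace ℝ (Fin (k+2)) => (w (Fin.castAdd 2 i))^2)
        = fun w => (EuclideanSpace.proj (Fin.castAdd 2 i)) w * (EuclideanSpace.proj (Fin.castAdd 2 i)) w := by
      funext w; simp [sq]
    rw [h2]
    refine this.congr_fderiv (Eq.symm ?_)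
    ext w; simp; ring
  exact HasFDerivAt.fun_sum (fun i _ => h i)

lemma hasV {k : ℕ} (z : EuclideanSpace ℝ (Fin (k+2))) : HasFDerivAt (Vf k) (dV k z) z := by
  have h : ∀ j : Fin 2, HasFDerivAt (fun w : EuclideanSpace ℝ (Fin (k+2)) => (w (Fin.natAdd k j))^2)
      ((2 * z (Fin.natAdd k j)) • EuclideanSpace.proj (Fin.natAdd k j) :
        EuclideanSpace ℝ (Fin (k+2)) →L[ℝ] ℝ) z := by
    intro j
    have hp := (EuclideanSpace.proj (Fin.natAdd k j) :
        EuclideanSpace ℝ (Fin (k+2)) →L[ℝ] ℝ).hasFDerivAt (x := z)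
    have := hp.fun_mul hp
    have h2 : (fun w : EuclideanSpace ℝ (Fin (k+2)) => (w (Fin.natAdd k j))^2)
        = fun w => (EuclideanSpace.proj (Fin.natAdd k j)) w * (EuclideanSpace.proj (Fin.natAdd k j)) w := by
      funext w; simp [sq]
    rw [h2]
    refine this.congr_fderiv (Eq.symm ?_)
    ext w; simp; ring
  have hS : HasFDerivAt (Sf k) (∑ j : Fin 2, (2 * z (Fin.natAdd k j)) • EuclideanSpace.proj (Fin.natAdd k j) :
      EuclideanSpace ℝ (Fin (k+2)) →L[ℝ] ℝ) z := HasFDerivAt.fun_sum (fun j _ => h j)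
  have := hS.const_mul ((k:ℝ)-1)
  refine this.congr_fderiv (Eq.symm ?_)
  ext w
  simp [dV, ContinuousLinearMap.sum_apply, Finset.mul_sum]
  ring_nf

lemma dU_apply {k : ℕ} (z w : EuclideanSpace ℝ (Fin (k+2))) :
    dU k z w = ∑ i : Fin k, 2 * z (Fin.castAdd 2 i) * w (Fin.castAdd 2 i) := by
  simp [dU, ContinuousLinearMap.sum_apply]
lemma dV_apply {k : ℕ} (z w : EuclideanSpace ℝ (Fin (k+2))) :
    dV k z w = ∑ j : Fin 2, 2 * ((k:ℝ)-1) * z (Fin.natAdd k j) * w (Fin.natAdd k j) := by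
  simp [dV, ContinuousLinearMap.sum_apply]

lemma single_cast_ne {k : ℕ} (i : Fin k) (j : Fin 2) :
    (EuclideanSpace.single (Fin.castAdd 2 i) (1:ℝ)) (Fin.natAdd k j) = 0 := by
  rw [EuclideanSpace.single_apply, if_neg (fin_cast_ne_nat i j).symm]
lemma single_nat_ne {k : ℕ} (i : Fin k) (j : Fin 2) :
    (EuclideanSpace.single (Fin.natAdd k j) (1:ℝ)) (Fin.castAdd 2 i) = 0 := by
  rw [EuclideanSpace.single_apply, if_neg (fin_cast_ne_nat i j)]

lemma dU_single_cast {k : ℕ} (z : EuclideanSpace ℝ (Fin (k+2))) (i : Fin k) :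
    dU k z (EuclideanSpace.single (Fin.castAdd 2 i) 1) = 2 * z (Fin.castAdd 2 i) := by
  rw [dU_apply, Finset.sum_eq_single i]
  · rw [EuclideanSpace.single_apply, if_pos rfl, mul_one]
  · intro b _ hb
    rw [EuclideanSpace.single_apply, if_neg (by simp [Fin.ext_iff]; omega), mul_zero]
  · simp
lemma dU_single_nat {k : ℕ} (z : EuclideanSpace ℝ (Fin (k+2))) (j : Fin 2) :
    dU k z (EuclideanSpace.single (Fin.natAdd k j) 1) = 0 := by
  rw [dU_apply]; apply Finset.sum_eq_zero; intro b _
  rw [single_nat_ne, mul_zero]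
lemma dV_single_cast {k : ℕ} (z : EuclideanSpace ℝ (Fin (k+2))) (i : Fin k) :
    dV k z (EuclideanSpace.single (Fin.castAdd 2 i) 1) = 0 := by
  rw [dV_apply]; apply Finset.sum_eq_zero; intro b _
  rw [single_cast_ne, mul_zero]
lemma dV_single_nat {k : ℕ} (z : EuclideanSpace ℝ (Fin (k+2))) (j : Fin 2) :
    dV k z (EuclideanSpace.single (Fin.natAdd k j) 1) = 2 * ((k:ℝ)-1) * z (Fin.natAdd k j) := by
  rw [dV_apply, Finset.sum_eq_single j]
  · rw [EuclideanSpace.single_apply, if_pos rfl, mul_one]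
  · intro b _ hb
    rw [EuclideanSpace.single_apply, if_neg (by simp [Fin.ext_iff]; omega), mul_zero]
  · simp

/- the gradient vector field -/
def Gv (k : ℕ) (z : EuclideanSpace ℝ (Fin (k+2))) : EuclideanSpace ℝ (Fin (k+2)) :=
  (Vf k z / 2) • PX k z + (((k:ℝ)-1) * (Uf k z - 2 * Vf k z) / 2) • PY k z

lemma Gv_cast {k : ℕ} (z : EuclideanSpace ℝ (Fin (k+2))) (i : Fin k) :
    Gv k z (Fin.castAdd 2 i) = Vf k z / 2 * z (Fin.castAdd 2 i) := by
  simp [Gv, PiLp.add_apply, PiLp.smul_apply, PX_cast, PY_cast]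
lemma Gv_nat {k : ℕ} (z : EuclideanSpace ℝ (Fin (k+2))) (j : Fin 2) :
    Gv k z (Fin.natAdd k j) = ((k:ℝ)-1) * (Uf k z - 2 * Vf k z) / 2 * z (Fin.natAdd k j) := by
  simp [Gv, PiLp.add_apply, PiLp.smul_apply, PX_nat, PY_nat]

lemma uu_eq (k : ℕ) (z : EuclideanSpace ℝ (Fin (k+2))) : uu k z = Uf k z := by
  rw [uu, nX, Real.sq_sqrt (Finset.sum_nonneg fun i _ => sq_nonneg _)]; rfl
lemma vv_eq (k : ℕ) (z : EuclideanSpace ℝ (Fin (k+2))) : vv k z = Vf k z := by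
  rw [vv, nY, Real.sq_sqrt (Finset.sum_nonneg fun i _ => sq_nonneg _)]; rfl

lemma hasGradFm {k : ℕ} (z : EuclideanSpace ℝ (Fin (k+2))) :
    HasGradientAt (fm k) (Gv k z) z := by
  have hU := hasU z
  have hV := hasV z
  have hfm : fm k = fun w => (1/4 : ℝ) * ((Uf k w - Vf k w) * Vf k w) := by
    funext w; rw [fm, uu_eq, vv_eq]; ring
  have hD := ((hU.fun_sub hV).fun_mul hV).const_mul (1/4 : ℝ)
  rw [hasGradientAt_iff_hasFDerivAt, hfm]
  refine hD.congr_fderiv (Eq.symm ?_)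
  ext w
  rw [InnerProductSpace.toDual_apply_apply]
  rw [PiLp.inner_apply]
  simp only [RCLike.inner_apply, starRingEnd_apply, star_trivial]
  rw [Fin.sum_univ_add]
  simp only [Gv_cast, Gv_nat]
  simp only [ContinuousLinearMap.coe_smul', Pi.smul_apply, ContinuousLinearMap.add_apply,
    ContinuousLinearMap.coe_sub', Pi.sub_apply, smul_eq_mul,
    ContinuousLinearMap.smul_apply, ContinuousLinearMap.sub_apply]
  rw [dU_apply, dV_apply]
  have hP : ∀ c : ℝ, ∑ x : Fin k, c * z (Fin.castAdd 2 x) * w (Fin.castAdd 2 x)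
      = c * ∑ x : Fin k, z (Fin.castAdd 2 x) * w (Fin.castAdd 2 x) := fun c => by
    rw [Finset.mul_sum]; exact Finset.sum_congr rfl fun x _ => by ring
  have hR : ∀ c : ℝ, ∑ x : Fin 2, c * z (Fin.natAdd k x) * w (Fin.natAdd k x)
      = c * ∑ x : Fin 2, z (Fin.natAdd k x) * w (Fin.natAdd k x) := fun c => by
    rw [Finset.mul_sum]; exact Finset.sum_congr rfl fun x _ => by ring
  simp only [mul_comm (w _)]
  rw [hP, hR, hP 2, hR (2 * ((k:ℝ)-1))]
  ring

def Qf (k : ℕ) (z : EuclideanSpace ℝ (Fin (k+2))) : ℝ :=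
  (Uf k z * Vf k z ^ 2 + ((k:ℝ)-1) * Vf k z * (Uf k z - 2 * Vf k z) ^ 2) / 4

lemma normG_sq {k : ℕ} (z : EuclideanSpace ℝ (Fin (k+2))) : ‖Gv k z‖ ^ 2 = Qf k z := by
  have h : ‖Gv k z‖ ^ 2 = ∑ m : Fin (k+2), (Gv k z m) ^ 2 := by
    rw [EuclideanSpace.norm_eq, Real.sq_sqrt (Finset.sum_nonneg fun i _ => sq_nonneg _)]
    exact Finset.sum_congr rfl fun m _ => by rw [Real.norm_eq_abs, sq_abs]
  rw [h, Fin.sum_univ_add]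
  simp only [Gv_cast, Gv_nat]
  have hP : ∑ i : Fin k, (Vf k z / 2 * z (Fin.castAdd 2 i)) ^ 2
      = (Vf k z / 2) ^ 2 * Uf k z := by
    rw [Uf, Finset.mul_sum]; exact Finset.sum_congr rfl fun x _ => by ring
  have hR : ∑ j : Fin 2, (((k:ℝ)-1) * (Uf k z - 2 * Vf k z) / 2 * z (Fin.natAdd k j)) ^ 2
      = (((k:ℝ)-1) * (Uf k z - 2 * Vf k z) / 2) ^ 2 * Sf k z := by
    rw [Sf, Finset.mul_sum]; exact Finset.sum_congr rfl fun x _ => by ring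
  rw [hP, hR, Qf, Vf]
  ring

lemma hasQ {k : ℕ} (z : EuclideanSpace ℝ (Fin (k+2))) :
    HasFDerivAt (Qf k)
      (((Vf k z ^ 2 + 2 * ((k:ℝ)-1) * Vf k z * (Uf k z - 2 * Vf k z)) / 4) • dU k z
        + ((2 * Uf k z * Vf k z + ((k:ℝ)-1) * (Uf k z - 2 * Vf k z) ^ 2
            - 4 * ((k:ℝ)-1) * Vf k z * (Uf k z - 2 * Vf k z)) / 4) • dV k z) z := by
  have hU := hasU z
  have hV := hasV z
  have hQ' : Qf k = fun w => (1/4 : ℝ) * (Uf k w * (Vf k w * Vf k w)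
      + ((k:ℝ)-1) * Vf k w * ((Uf k w - 2 * Vf k w) * (Uf k w - 2 * Vf k w))) := by
    funext w; rw [Qf]; ring
  rw [hQ']
  have h1 := hU.fun_mul (hV.fun_mul hV)
  have h2 := (hV.const_mul ((k:ℝ)-1)).fun_mul ((hU.fun_sub (hV.const_mul 2)).fun_mul (hU.fun_sub (hV.const_mul 2)))
  have h3 := (h1.fun_add h2).const_mul (1/4 : ℝ)
  refine h3.congr_fderiv (Eq.symm ?_)
  ext w
  simp only [ContinuousLinearMap.add_apply, ContinuousLinearMap.coe_smul', Pi.smul_apply,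
    ContinuousLinearMap.smul_apply, ContinuousLinearMap.coe_sub', Pi.sub_apply,
    ContinuousLinearMap.sub_apply, smul_eq_mul]
  ring

lemma hasG {k : ℕ} (z : EuclideanSpace ℝ (Fin (k+2))) :
    HasFDerivAt (Gv k)
      (((Vf k z / 2) • PX k + ((1/2 : ℝ) • dV k z).smulRight (PX k z))
        + ((((k:ℝ)-1) * (Uf k z - 2 * Vf k z) / 2) • PY k
          + ((((k:ℝ)-1)/2) • (dU k z - (2:ℝ) • dV k z)).smulRight (PY k z))) z := by
  have hU := hasU z
  have hV := hasV z
  have hs1 : HasFDerivAt (fun w => Vf k w / 2) ((1/2 : ℝ) • dV k z) z := by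
    have heq : (fun w : EuclideanSpace ℝ (Fin (k+2)) => (1:ℝ)/2 * Vf k w)
        = fun w => Vf k w / 2 := funext fun w => by ring
    exact heq ▸ (hV.const_mul (1/2 : ℝ))
  have hs2 : HasFDerivAt (fun w => ((k:ℝ)-1) * (Uf k w - 2 * Vf k w) / 2)
      ((((k:ℝ)-1)/2) • (dU k z - (2:ℝ) • dV k z)) z := by
    have hsub := hU.sub (hV.const_mul (2:ℝ))
    have heq : (fun w : EuclideanSpace ℝ (Fin (k+2)) => ((k:ℝ)-1)/2 * (Uf k w - 2 * Vf k w))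
        = fun w => ((k:ℝ)-1) * (Uf k w - 2 * Vf k w) / 2 := funext fun w => by ring
    exact heq ▸ (hsub.const_mul (((k:ℝ)-1)/2))
  exact (hs1.smul (PX k).hasFDerivAt).add (hs2.smul (PY k).hasFDerivAt)

lemma trace_clm {n : ℕ} (T : EuclideanSpace ℝ (Fin n) →L[ℝ] EuclideanSpace ℝ (Fin n)) :
    LinearMap.trace ℝ _ T.toLinearMap = ∑ m, T (EuclideanSpace.single m 1) m := by
  classical
  rw [LinearMap.trace_eq_matrix_trace ℝ (EuclideanSpace.basisFun (Fin n) ℝ).toBasis]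
  simp [Matrix.trace, LinearMap.toMatrix_apply, Matrix.diag]

lemma keyalg (R T1 T2 N : ℝ) (hR : R ≠ 0) (h : 2*(R^2)*T1 - T2 = 2*N) :
    R⁻¹*T1 + (-(1/(2*R))/R^2)*T2 = N/(R^2*R) := by
  rw [show N = (2*(R^2)*T1 - T2)/2 by linarith]
  field_simp
  ring


/-- The explicit formula for `div g` and `|∇f₋|^2` on `{u < v}` for `(h,k) = (2,k)`
with `d = 1` (Section 3.3 of the paper). -/
theorem stmt15 (k : ℕ) (hk7 : 7 ≤ k) (hk11 : k ≤ 11)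
    (z : EuclideanSpace ℝ (Fin (k + 2))) (hz : uu k z < vv k z) :
    divg (fun w => ‖gradient (fm k) w‖⁻¹ • gradient (fm k) w) z =
        (1 / 8 * ((k : ℝ) - 1) * (uu k z - vv k z) * vv k z *
            (((k : ℝ) - 1) * uu k z ^ 2 + (3 - 4 * (k : ℝ)) * uu k z * vv k z
              + 4 * ((k : ℝ) - 2) * vv k z ^ 2))
          / (1 / 4 * vv k z *
              (((k : ℝ) - 1) * (uu k z - 2 * vv k z) ^ 2
                + uu k z * vv k z)) ^ ((3 : ℝ) / 2) ∧
      ‖gradient (fm k) z‖ ^ 2 =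
        1 / 4 * vv k z *
          (((k : ℝ) - 1) * (uu k z - 2 * vv k z) ^ 2 + uu k z * vv k z) := by
  have c7 : (7:ℝ) ≤ (k:ℝ) := by exact_mod_cast hk7
  have hc : (0:ℝ) < (k:ℝ) - 1 := by linarith
  have hu0 : 0 ≤ Uf k z := Finset.sum_nonneg fun i _ => sq_nonneg _
  have huv : Uf k z < Vf k z := by rw [← uu_eq, ← vv_eq]; exact hz
  have hv0 : 0 < Vf k z := lt_of_le_of_lt hu0 huv
  have hQ0 : 0 < Qf k z := by
    rw [Qf]
    have hsq : Vf k z ^ 2 ≤ (Uf k z - 2 * Vf k z) ^ 2 := by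
      nlinarith [mul_pos (sub_pos.2 huv) (show (0:ℝ) < 3 * Vf k z - Uf k z by linarith)]
    nlinarith [mul_nonneg hu0 (sq_nonneg (Vf k z)),
      mul_le_mul_of_nonneg_left hsq (le_of_lt (mul_pos hc hv0)),
      mul_pos (mul_pos hc hv0) (mul_pos hv0 hv0)]
  have hr0 : 0 < Real.sqrt (Qf k z) := Real.sqrt_pos.2 hQ0
  have hr2 : Real.sqrt (Qf k z) ^ 2 = Qf k z := Real.sq_sqrt hQ0.le
  have hdenom : 1 / 4 * vv k z * (((k : ℝ) - 1) * (uu k z - 2 * vv k z) ^ 2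
      + uu k z * vv k z) = Qf k z := by
    rw [uu_eq, vv_eq, Qf]; ring
  refine ⟨?_, by rw [(hasGradFm z).gradient, normG_sq, hdenom]⟩
  have hfun : (fun w => ‖gradient (fm k) w‖⁻¹ • gradient (fm k) w)
      = fun w => (Real.sqrt (Qf k w))⁻¹ • Gv k w := by
    funext w
    rw [(hasGradFm w).gradient]
    congr 2
    rw [← normG_sq w, Real.sqrt_sq (norm_nonneg _)]
  have hφ : HasFDerivAt (fun w => (Real.sqrt (Qf k w))⁻¹)
      ((-(1 / (2 * Real.sqrt (Qf k z))) / Real.sqrt (Qf k z) ^ 2) •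
        (((Vf k z ^ 2 + 2 * ((k:ℝ)-1) * Vf k z * (Uf k z - 2 * Vf k z)) / 4) • dU k z
          + ((2 * Uf k z * Vf k z + ((k:ℝ)-1) * (Uf k z - 2 * Vf k z) ^ 2
              - 4 * ((k:ℝ)-1) * Vf k z * (Uf k z - 2 * Vf k z)) / 4) • dV k z)) z := by
    have h1 : HasDerivAt (fun t : ℝ => (Real.sqrt t)⁻¹)
        (-(1 / (2 * Real.sqrt (Qf k z))) / Real.sqrt (Qf k z) ^ 2) (Qf k z) :=
      (Real.hasDerivAt_sqrt hQ0.ne').inv hr0.ne'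
    exact h1.comp_hasFDerivAt z (hasQ z)
  have hg := hφ.fun_smul (hasG z)
  rw [divg, hfun, hg.fderiv, trace_clm, Fin.sum_univ_add]
  simp only [ContinuousLinearMap.add_apply, ContinuousLinearMap.coe_smul', Pi.smul_apply,
    ContinuousLinearMap.smulRight_apply, ContinuousLinearMap.smul_apply,
    ContinuousLinearMap.sub_apply, ContinuousLinearMap.coe_sub', Pi.sub_apply,
    PiLp.add_apply, PiLp.smul_apply, smul_eq_mul,
    PX_cast, PX_nat, PY_cast, PY_nat, Gv_cast, Gv_nat,
    dU_single_cast, dU_single_nat, dV_single_cast, dV_single_nat,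
    EuclideanSpace.single_apply, if_true]
  have hvs : ((k:ℝ) - 1) * Sf k z = Vf k z := rfl
  have hQexp : (Real.sqrt (Qf k z)) ^ 2 = (Uf k z * Vf k z ^ 2 + ((k:ℝ) - 1) * Vf k z * (Uf k z - 2 * Vf k z) ^ 2) / 4 := by
    rw [hr2]; rfl
  have e1 : (∑ x : Fin k, ((Real.sqrt (Qf k z))⁻¹ *
            (Vf k z / 2 * 1 + 1 / 2 * 0 * z (Fin.castAdd 2 x) +
              (((k:ℝ) - 1) * (Uf k z - 2 * Vf k z) / 2 * 0 + ((k:ℝ) - 1) / 2 * (2 * z (Fin.castAdd 2 x) - 2 * 0) * 0)) +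
          (-(1 / (2 * Real.sqrt (Qf k z))) / Real.sqrt (Qf k z) ^ 2) *
              (((Vf k z ^ 2 + 2 * ((k:ℝ) - 1) * Vf k z * (Uf k z - 2 * Vf k z)) / 4) * (2 * z (Fin.castAdd 2 x)) +
                ((2 * Uf k z * Vf k z + ((k:ℝ) - 1) * (Uf k z - 2 * Vf k z) ^ 2 - 4 * ((k:ℝ) - 1) * Vf k z * (Uf k z - 2 * Vf k z)) / 4) * 0) *
            (Vf k z / 2 * z (Fin.castAdd 2 x)))) =
      (k:ℝ) * ((Real.sqrt (Qf k z))⁻¹ * (Vf k z / 2)) + ((-(1 / (2 * Real.sqrt (Qf k z))) / Real.sqrt (Qf k z) ^ 2) * ((Vf k z ^ 2 + 2 * ((k:ℝ) - 1) * Vf k z * (Uf k z - 2 * Vf k z)) / 4) * Vf k z) * Uf k z := by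
    have h : ∀ x : Fin k, ((Real.sqrt (Qf k z))⁻¹ *
            (Vf k z / 2 * 1 + 1 / 2 * 0 * z (Fin.castAdd 2 x) +
              (((k:ℝ) - 1) * (Uf k z - 2 * Vf k z) / 2 * 0 + ((k:ℝ) - 1) / 2 * (2 * z (Fin.castAdd 2 x) - 2 * 0) * 0)) +
          (-(1 / (2 * Real.sqrt (Qf k z))) / Real.sqrt (Qf k z) ^ 2) *
              (((Vf k z ^ 2 + 2 * ((k:ℝ) - 1) * Vf k z * (Uf k z - 2 * Vf k z)) / 4) * (2 * z (Fin.castAdd 2 x)) +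
                ((2 * Uf k z * Vf k z + ((k:ℝ) - 1) * (Uf k z - 2 * Vf k z) ^ 2 - 4 * ((k:ℝ) - 1) * Vf k z * (Uf k z - 2 * Vf k z)) / 4) * 0) *
            (Vf k z / 2 * z (Fin.castAdd 2 x))) =
        (Real.sqrt (Qf k z))⁻¹ * (Vf k z / 2) + ((-(1 / (2 * Real.sqrt (Qf k z))) / Real.sqrt (Qf k z) ^ 2) * ((Vf k z ^ 2 + 2 * ((k:ℝ) - 1) * Vf k z * (Uf k z - 2 * Vf k z)) / 4) * Vf k z) * z (Fin.castAdd 2 x) ^ 2 := fun x => by ring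
    rw [Finset.sum_congr rfl fun x _ => h x, Finset.sum_add_distrib, Finset.sum_const,
      ← Finset.mul_sum, Finset.card_univ, Fintype.card_fin,
      show (∑ x : Fin k, z (Fin.castAdd 2 x) ^ 2) = Uf k z from rfl, nsmul_eq_mul]
  have e2 : (∑ x : Fin 2, ((Real.sqrt (Qf k z))⁻¹ *
            (Vf k z / 2 * 0 + 1 / 2 * (2 * ((k:ℝ) - 1) * z (Fin.natAdd k x)) * 0 +
              (((k:ℝ) - 1) * (Uf k z - 2 * Vf k z) / 2 * 1 +
                ((k:ℝ) - 1) / 2 * (0 - 2 * (2 * ((k:ℝ) - 1) * z (Fin.natAdd k x))) * z (Fin.natAdd k x))) +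
          (-(1 / (2 * Real.sqrt (Qf k z))) / Real.sqrt (Qf k z) ^ 2) *
              (((Vf k z ^ 2 + 2 * ((k:ℝ) - 1) * Vf k z * (Uf k z - 2 * Vf k z)) / 4) * 0 +
                ((2 * Uf k z * Vf k z + ((k:ℝ) - 1) * (Uf k z - 2 * Vf k z) ^ 2 - 4 * ((k:ℝ) - 1) * Vf k z * (Uf k z - 2 * Vf k z)) / 4) *
                  (2 * ((k:ℝ) - 1) * z (Fin.natAdd k x))) *
            (((k:ℝ) - 1) * (Uf k z - 2 * Vf k z) / 2 * z (Fin.natAdd k x)))) =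
      ((Real.sqrt (Qf k z))⁻¹ * (((k:ℝ) - 1) * (Uf k z - 2 * Vf k z) / 2)) * 2 + (((-(1 / (2 * Real.sqrt (Qf k z))) / Real.sqrt (Qf k z) ^ 2) * ((2 * Uf k z * Vf k z + ((k:ℝ) - 1) * (Uf k z - 2 * Vf k z) ^ 2 - 4 * ((k:ℝ) - 1) * Vf k z * (Uf k z - 2 * Vf k z)) / 4) * ((k:ℝ) - 1) * (Uf k z - 2 * Vf k z) - (Real.sqrt (Qf k z))⁻¹ * 2 * ((k:ℝ) - 1))) * Vf k z := by
    have h : ∀ x : Fin 2, ((Real.sqrt (Qf k z))⁻¹ *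
            (Vf k z / 2 * 0 + 1 / 2 * (2 * ((k:ℝ) - 1) * z (Fin.natAdd k x)) * 0 +
              (((k:ℝ) - 1) * (Uf k z - 2 * Vf k z) / 2 * 1 +
                ((k:ℝ) - 1) / 2 * (0 - 2 * (2 * ((k:ℝ) - 1) * z (Fin.natAdd k x))) * z (Fin.natAdd k x))) +
          (-(1 / (2 * Real.sqrt (Qf k z))) / Real.sqrt (Qf k z) ^ 2) *
              (((Vf k z ^ 2 + 2 * ((k:ℝ) - 1) * Vf k z * (Uf k z - 2 * Vf k z)) / 4) * 0 +
                ((2 * Uf k z * Vf k z + ((k:ℝ) - 1) * (Uf k z - 2 * Vf k z) ^ 2 - 4 * ((k:ℝ) - 1) * Vf k z * (Uf k z - 2 * Vf k z)) / 4) *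
                  (2 * ((k:ℝ) - 1) * z (Fin.natAdd k x))) *
            (((k:ℝ) - 1) * (Uf k z - 2 * Vf k z) / 2 * z (Fin.natAdd k x))) =
        ((Real.sqrt (Qf k z))⁻¹ * (((k:ℝ) - 1) * (Uf k z - 2 * Vf k z) / 2)) + (((-(1 / (2 * Real.sqrt (Qf k z))) / Real.sqrt (Qf k z) ^ 2) * ((2 * Uf k z * Vf k z + ((k:ℝ) - 1) * (Uf k z - 2 * Vf k z) ^ 2 - 4 * ((k:ℝ) - 1) * Vf k z * (Uf k z - 2 * Vf k z)) / 4) * ((k:ℝ) - 1) ^ 2 * (Uf k z - 2 * Vf k z) - (Real.sqrt (Qf k z))⁻¹ * 2 * ((k:ℝ) - 1) ^ 2)) * z (Fin.natAdd k x) ^ 2 := fun x => by ring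
    rw [Finset.sum_congr rfl fun x _ => h x, Finset.sum_add_distrib, Finset.sum_const,
      ← Finset.mul_sum, Finset.card_univ, Fintype.card_fin,
      show (∑ x : Fin 2, z (Fin.natAdd k x) ^ 2) = Sf k z from rfl, nsmul_eq_mul]
    push_cast
    linear_combination (((-(1 / (2 * Real.sqrt (Qf k z))) / Real.sqrt (Qf k z) ^ 2) * ((2 * Uf k z * Vf k z + ((k:ℝ) - 1) * (Uf k z - 2 * Vf k z) ^ 2 - 4 * ((k:ℝ) - 1) * Vf k z * (Uf k z - 2 * Vf k z)) / 4) * ((k:ℝ) - 1) * (Uf k z - 2 * Vf k z) - (Real.sqrt (Qf k z))⁻¹ * 2 * ((k:ℝ) - 1))) * hvs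
  rw [e1, e2, uu_eq, vv_eq]
  have hdenom2 : 1 / 4 * Vf k z * (((k:ℝ) - 1) * (Uf k z - 2 * Vf k z) ^ 2 + Uf k z * Vf k z) = Qf k z := by
    rw [Qf]; ring
  rw [hdenom2]
  have hpow2 : Qf k z ^ ((3:ℝ)/2) = (Real.sqrt (Qf k z)) ^ 2 * (Real.sqrt (Qf k z)) := by
    rw [show ((3:ℝ)/2) = 1 + 1/2 by norm_num, Real.rpow_add hQ0, Real.rpow_one,
      ← Real.sqrt_eq_rpow]
    nth_rewrite 1 [← hr2]
    rfl
  rw [hpow2]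
  have hmain : 2 * ((Real.sqrt (Qf k z)) ^ 2) * ((k:ℝ) * (Vf k z / 2) + ((k:ℝ) - 1) * (Uf k z - 2 * Vf k z) - 2 * ((k:ℝ) - 1) * Vf k z) - (((Vf k z ^ 2 + 2 * ((k:ℝ) - 1) * Vf k z * (Uf k z - 2 * Vf k z)) / 4) * Vf k z * Uf k z + ((2 * Uf k z * Vf k z + ((k:ℝ) - 1) * (Uf k z - 2 * Vf k z) ^ 2 - 4 * ((k:ℝ) - 1) * Vf k z * (Uf k z - 2 * Vf k z)) / 4) * ((k:ℝ) - 1) * (Uf k z - 2 * Vf k z) * Vf k z) = 2 * (1 / 8 * ((k:ℝ) - 1) * (Uf k z - Vf k z) * Vf k z * (((k:ℝ) - 1) * Uf k z ^ 2 + (3 - 4 * (k:ℝ)) * Uf k z * Vf k z + 4 * ((k:ℝ) - 2) * Vf k z ^ 2)) := by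
    linear_combination (2 * ((k:ℝ) * (Vf k z / 2) + ((k:ℝ) - 1) * (Uf k z - 2 * Vf k z) - 2 * ((k:ℝ) - 1) * Vf k z)) * hQexp
  linear_combination keyalg (Real.sqrt (Qf k z)) ((k:ℝ) * (Vf k z / 2) + ((k:ℝ) - 1) * (Uf k z - 2 * Vf k z) - 2 * ((k:ℝ) - 1) * Vf k z) (((Vf k z ^ 2 + 2 * ((k:ℝ) - 1) * Vf k z * (Uf k z - 2 * Vf k z)) / 4) * Vf k z * Uf k z + ((2 * Uf k z * Vf k z + ((k:ℝ) - 1) * (Uf k z - 2 * Vf k z) ^ 2 - 4 * ((k:ℝ) - 1) * Vf k z * (Uf k z - 2 * Vf k z)) / 4) * ((k:ℝ) - 1) * (Uf k z - 2 * Vf k z) * Vf k z) (1 / 8 * ((k:ℝ) - 1) * (Uf k z - Vf k z) * Vf k z * (((k:ℝ) - 1) * Uf k z ^ 2 + (3 - 4 * (k:ℝ)) * Uf k z * Vf k z + 4 * ((k:ℝ) - 2) * Vf k z ^ 2)) hr0.ne' hmain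
end
end
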